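/- If V is a finite-dimensional real vector space admitting a generalized complex structure, then the real dimension of V is even. -/

import Mathlib

open Module LinearMap

/-- The standard pairing `⟨v+f, w+g⟩ = -(1/2)(f(w)+g(v))` on `V ⊕ V*`. -/
noncomputable def gcPair (V : Type*) [AddCommGroup V] [Module ℝ V]
    (x y : V × Module.Dual ℝ V) : ℝ :=
  -(1/2) * (x.2 y.1 + y.2 x.1)

/-- A generalized complex structure on `V`: an ℝ-linear endomorphism of `V ⊕ V*`
(necessarily an automorphism) with square `-1` preserving the standard pairing. -/
noncomputable def IsGCS (V : Type*) [AddCommGroup V] [Module ℝ V]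
    (J : (V × Module.Dual ℝ V) →ₗ[ℝ] (V × Module.Dual ℝ V)) : Prop :=
  J ∘ₗ J = -LinearMap.id ∧ ∀ x y, gcPair V (J x) (J y) = gcPair V x y

/-- The pairing `gcPair` packaged as a bilinear form. -/
noncomputable def gcForm (V : Type*) [AddCommGroup V] [Module ℝ V] :
    LinearMap.BilinForm ℝ (V × Module.Dual ℝ V) :=
  LinearMap.mk₂ ℝ (gcPair V)
    (by intro m m' n; simp [gcPair]; ring)
    (by intro c m n; simp [gcPair, smul_eq_mul]; ring)
    (by intro m n n'; simp [gcPair]; ring)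
    (by intro c m n; simp [gcPair, smul_eq_mul]; ring)

theorem gcForm_apply (V : Type*) [AddCommGroup V] [Module ℝ V] (x y : V × Module.Dual ℝ V) :
    gcForm V x y = gcPair V x y := rfl

theorem gcForm_symm (V : Type*) [AddCommGroup V] [Module ℝ V] (x y : V × Module.Dual ℝ V) :
    gcForm V x y = gcForm V y x := by
  simp [gcForm_apply, gcPair]; ring

theorem gcForm_nondeg (V : Type*) [AddCommGroup V] [Module ℝ V] :
    (gcForm V).Nondegenerate := by
  refine (LinearMap.IsRefl.nondegenerate_iff_separatingLeft (fun x y h => by rw [gcForm_symm]; exact h)).mpr ?_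
  intro x hx
  have h1 : ∀ w : V, x.2 w = 0 := by
    intro w
    have := hx (w, 0)
    simp [gcForm_apply, gcPair] at this
    simpa using this
  have h2 : x.1 = 0 := by
    rw [← Module.forall_dual_apply_eq_zero_iff ℝ x.1]
    intro g
    have := hx (0, g)
    simp [gcForm_apply, gcPair] at this
    simpa using this
  have : x.2 = 0 := by ext w; simp [h1]
  exact Prod.ext h2 this

/-- Given a symmetric bilinear form `B` and an orthogonal complex structure `J` on a
finite-dimensional real space, every `J`-invariant subspace `U` contains a `J`-invariant
positive-definite subspace `P` such that the part of `U` orthogonal to `P` is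
negative semidefinite. -/
theorem exists_posdef_invariant {M : Type*} [AddCommGroup M] [Module ℝ M]
    [FiniteDimensional ℝ M]
    (B : LinearMap.BilinForm ℝ M) (hsymm : ∀ x y, B x y = B y x)
    (J : M →ₗ[ℝ] M) (hJ2 : ∀ x, J (J x) = -x) (hJB : ∀ x y, B (J x) (J y) = B x y) :
    ∀ (n : ℕ) (U : Submodule ℝ M), finrank ℝ U ≤ n → (∀ x ∈ U, J x ∈ U) →
    ∃ P : Submodule ℝ M, P ≤ U ∧ (∀ x ∈ P, J x ∈ P) ∧
      (∀ x ∈ P, x ≠ 0 → 0 < B x x) ∧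
      (∀ x ∈ U, (∀ p ∈ P, B x p = 0) → B x x ≤ 0) := by
  intro n
  induction n with
  | zero =>
    intro U hU _
    have hUbot : U = ⊥ := Submodule.finrank_eq_zero.mp (Nat.le_zero.mp hU)
    refine ⟨⊥, bot_le, ?_, ?_, ?_⟩
    · intro x hx; simp_all
    · intro x hx hx0; simp_all
    · intro x hxU _
      have : x = 0 := by simpa [hUbot] using hxU
      simp [this]
  | succ n ih =>
    intro U hU hUJ
    by_cases hpos : ∀ x ∈ U, B x x ≤ 0
    · exact ⟨⊥, bot_le, by intro x hx; simp_all, by intro x hx hx0; simp_all,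
        fun x hx _ => hpos x hx⟩
    push_neg at hpos
    obtain ⟨x, hxU, hx⟩ := hpos
    have hx' : 0 < B x x := hx
    have hxne : x ≠ 0 := by rintro rfl; simp at hx'
    have hJxJx : B (J x) (J x) = B x x := hJB x x
    have hxJx : B x (J x) = 0 := by
      have h := hJB x (J x)
      rw [hJ2 x] at h
      have h2 : -(B (J x) x) = B x (J x) := by simpa using h
      rw [hsymm (J x) x] at h2
      linarith
    set S : Submodule ℝ M := Submodule.span ℝ {x, J x} with hS
    have hxS : x ∈ S := Submodule.subset_span (by simp)
    have hJxS : J x ∈ S := Submodule.subset_span (by simp)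
    have hSU : S ≤ U := by
      rw [hS, Submodule.span_le]
      rintro y (rfl | rfl)
      · exact hxU
      · exact hUJ x hxU
    have hSJ : ∀ s ∈ S, J s ∈ S := by
      intro s hs
      rw [hS, Submodule.mem_span_pair] at hs ⊢
      obtain ⟨a, b, rfl⟩ := hs
      exact ⟨-b, a, by simp [map_add, map_smul, hJ2 x, smul_neg]; abel⟩
    have hSpos : ∀ s ∈ S, s ≠ 0 → 0 < B s s := by
      intro s hs hsne
      rw [hS, Submodule.mem_span_pair] at hs
      obtain ⟨a, b, rfl⟩ := hs
      have hexp : B (a • x + b • J x) (a • x + b • J x) = (a ^ 2 + b ^ 2) * B x x := by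
        simp [map_add, map_smul, smul_eq_mul, hxJx, hJxJx, hsymm (J x) x]
        nlinarith [hxJx, hsymm (J x) x]
      rw [hexp]
      have hab : a ≠ 0 ∨ b ≠ 0 := by
        by_contra h
        push_neg at h
        exact hsne (by simp [h.1, h.2])
      have : 0 < a ^ 2 + b ^ 2 := by
        rcases hab with h | h <;> positivity
      positivity
    set U' : Submodule ℝ M := U ⊓ B.orthogonal S with hU'
    have hU'le : U' ≤ U := inf_le_left
    have hU'J : ∀ y ∈ U', J y ∈ U' := by
      rintro y ⟨hyU, hyO⟩
      refine ⟨hUJ y hyU, ?_⟩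
      intro s hs
      have hs' : J s ∈ S := hSJ s hs
      have : B (J (J s)) (J y) = B (J s) y := hJB (J s) y
      rw [hJ2 s] at this
      have hz : B (J s) y = 0 := hyO (J s) hs'
      have : -(B s (J y)) = 0 := by rw [← hz, ← this]; simp
      simpa [LinearMap.BilinForm.IsOrtho] using (neg_eq_zero.mp this)
    have hxnotU' : x ∉ U' := by
      rintro ⟨_, hO⟩
      have := hO x hxS
      linarith
    have hlt : finrank ℝ U' ≤ n := by
      have : U' < U := lt_of_le_of_ne hU'le (by intro h; rw [h] at hxnotU'; exact hxnotU' hxU)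
      have := Submodule.finrank_lt_finrank_of_lt this
      omega
    obtain ⟨P', hP'U', hP'J, hP'pos, hP'neg⟩ := ih U' hlt hU'J
    have hP'orth : P' ≤ B.orthogonal S := le_trans hP'U' inf_le_right
    refine ⟨S ⊔ P', sup_le hSU (le_trans hP'U' hU'le), ?_, ?_, ?_⟩
    · intro y hy
      rw [Submodule.mem_sup] at hy ⊢
      obtain ⟨s, hs, p, hp, rfl⟩ := hy
      exact ⟨J s, hSJ s hs, J p, hP'J p hp, by simp [map_add]⟩
    · intro y hy hyne
      rw [Submodule.mem_sup] at hy
      obtain ⟨s, hs, p, hp, rfl⟩ := hy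
      have hsp : B s p = 0 := hP'orth hp s hs
      have hps : B p s = 0 := by rw [hsymm]; exact hsp
      have hexp : B (s + p) (s + p) = B s s + B p p := by
        simp [map_add, hsp, hps]
      rw [hexp]
      have hsnn : 0 ≤ B s s := by
        rcases eq_or_ne s 0 with rfl | hsne
        · simp
        · exact le_of_lt (hSpos s hs hsne)
      have hpnn : 0 ≤ B p p := by
        rcases eq_or_ne p 0 with rfl | hpne
        · simp
        · exact le_of_lt (hP'pos p hp hpne)
      have : s ≠ 0 ∨ p ≠ 0 := by
        by_contra h
        push_neg at h
        exact hyne (by simp [h.1, h.2])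
      rcases this with h | h
      · have := hSpos s hs h; linarith
      · have := hP'pos p hp h; linarith
    · intro y hyU hyperp
      have hyO : y ∈ B.orthogonal S := by
        intro s hs
        have : B y s = 0 := hyperp s (Submodule.mem_sup_left hs)
        rw [hsymm]
        exact this
      exact hP'neg y ⟨hyU, hyO⟩ (fun p hp => hyperp p (Submodule.mem_sup_right hp))

/-- The quadratic form associated with `Basis.toDual` of any basis is positive definite. -/
theorem basis_toDual_posdef {V : Type*} [AddCommGroup V] [Module ℝ V]
    [FiniteDimensional ℝ V] (v : V) (hv : v ≠ 0) :
    0 < (Module.finBasis ℝ V).toDual v v := by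
  set b := Module.finBasis ℝ V
  have key : ∀ w : V, b.toDual v w = ∑ i, b.repr v i * b.repr w i := by
    intro w
    conv_lhs => rw [← b.sum_repr v]
    simp only [map_sum, map_smul, LinearMap.sum_apply, LinearMap.smul_apply, Basis.toDual_apply_right, smul_eq_mul]
  rw [key]
  have hex : ∃ i, b.repr v i ≠ 0 := by
    by_contra h
    push_neg at h
    apply hv
    have : b.repr v = 0 := by ext i; simp [h]
    have := congrArg b.repr.symm this
    simpa using this
  obtain ⟨i, hi⟩ := hex
  apply Finset.sum_pos' (fun j _ => mul_self_nonneg _)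
  exact ⟨i, Finset.mem_univ i, by have := mul_self_pos.mpr hi; linarith⟩

set_option maxHeartbeats 1000000 in
set_option synthInstance.maxHeartbeats 200000 in
theorem even_finrank_of_isGCS (V : Type*) [AddCommGroup V] [Module ℝ V]
    [FiniteDimensional ℝ V]
    (J : (V × Module.Dual ℝ V) →ₗ[ℝ] (V × Module.Dual ℝ V)) (hJ : IsGCS V J) :
    Even (Module.finrank ℝ V) := by
  classical
  obtain ⟨hJsq, hJpair⟩ := hJ
  set n := finrank ℝ V with hn
  have hJ2 : ∀ x, J (J x) = -x := by
    intro x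
    have := LinearMap.ext_iff.mp hJsq x
    simpa using this
  have hJB : ∀ x y, gcForm V (J x) (J y) = gcForm V x y := hJpair
  have hsymm := gcForm_symm V
  have hrefl : (gcForm V).IsRefl := fun x y h => by rw [gcForm_symm]; exact h
  have hnondeg := gcForm_nondeg V
  have hW : finrank ℝ (V × Module.Dual ℝ V) = 2 * n := by
    rw [Module.finrank_prod, Subspace.dual_finrank_eq]; ring
  obtain ⟨P, -, hPJ, hPpos, hPneg⟩ :=
    exists_posdef_invariant (gcForm V) hsymm J hJ2 hJB
      (finrank ℝ (V × Module.Dual ℝ V)) ⊤ (le_of_eq (finrank_top ℝ _))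
      (fun x _ => Submodule.mem_top)
  -- the positive and negative "graph" subspaces
  set φ : V →ₗ[ℝ] Module.Dual ℝ V := (Module.finBasis ℝ V).toDual with hφ
  set fplus : V →ₗ[ℝ] V × Module.Dual ℝ V := LinearMap.prod LinearMap.id (-φ) with hfp
  set fminus : V →ₗ[ℝ] V × Module.Dual ℝ V := LinearMap.prod LinearMap.id φ with hfm
  have hfpinj : Function.Injective fplus := by
    intro a b hab
    simpa [hfp] using congrArg Prod.fst hab
  have hfminj : Function.Injective fminus := by
    intro a b hab
    simpa [hfm] using congrArg Prod.fst hab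
  set Pplus := LinearMap.range fplus with hPp
  set Nminus := LinearMap.range fminus with hNm
  have hPplusrank : finrank ℝ Pplus = n := by
    rw [hPp, LinearMap.finrank_range_of_inj hfpinj, hn]
  have hNminusrank : finrank ℝ Nminus = n := by
    rw [hNm, LinearMap.finrank_range_of_inj hfminj, hn]
  have hPplus_pos : ∀ x ∈ Pplus, x ≠ 0 → 0 < gcForm V x x := by
    rintro x ⟨v, rfl⟩ hxne
    have hv : v ≠ 0 := by rintro rfl; exact hxne (by simp)
    have : gcForm V (fplus v) (fplus v) = φ v v := by
      simp [gcForm_apply, gcPair, hfp]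
      ring
    rw [this]
    exact basis_toDual_posdef v hv
  have hNminus_neg : ∀ x ∈ Nminus, x ≠ 0 → gcForm V x x < 0 := by
    rintro x ⟨v, rfl⟩ hxne
    have hv : v ≠ 0 := by rintro rfl; exact hxne (by simp)
    have : gcForm V (fminus v) (fminus v) = -(φ v v) := by
      simp [gcForm_apply, gcPair, hfm]
      ring
    rw [this]
    have := basis_toDual_posdef v hv
    linarith
  set O := (gcForm V).orthogonal P with hO
  have hOrank : finrank ℝ O = 2 * n - finrank ℝ P := by
    rw [hO, LinearMap.BilinForm.finrank_orthogonal hnondeg P, hW]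
  have hOneg : ∀ x ∈ O, gcForm V x x ≤ 0 := by
    intro x hx
    apply hPneg x Submodule.mem_top
    intro p hp
    have := hx p hp
    rw [hsymm]
    exact this
  -- disjointness and dimension count
  have hD1 : Disjoint P Nminus := by
    rw [Submodule.disjoint_def]
    intro x hxP hxN
    by_contra hxne
    have h1 := hPpos x hxP hxne
    have h2 := hNminus_neg x hxN hxne
    linarith
  have hD2 : Disjoint Pplus O := by
    rw [Submodule.disjoint_def]
    intro x hxP hxO
    by_contra hxne
    have h1 := hPplus_pos x hxP hxne
    have h2 := hOneg x hxO
    linarith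
  have hParnk : finrank ℝ P ≤ 2 * n := hW ▸ Submodule.finrank_le P
  have hc1 : finrank ℝ P + finrank ℝ Nminus ≤ 2 * n := by
    have := Submodule.finrank_add_finrank_le_of_disjoint hD1
    omega
  have hc2 : finrank ℝ Pplus + finrank ℝ O ≤ 2 * n := by
    have := Submodule.finrank_add_finrank_le_of_disjoint hD2
    omega
  have hPrank : finrank ℝ P = n := by omega
  -- J restricts to P with square -1; determinant argument
  set Jres : P →ₗ[ℝ] P := J.restrict hPJ with hJres
  have hres2 : ∀ y : P, Jres (Jres y) = ((-1 : ℝ) • y : P) := by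
    intro y
    apply Subtype.ext
    have : (↑(Jres (Jres y)) : V × Module.Dual ℝ V) = J (J (y : V × Module.Dual ℝ V)) := by
      simp [hJres, LinearMap.restrict_apply]
    rw [this, hJ2]
    simp only [SetLike.val_smul]
    exact (neg_one_smul ℝ _).symm
  have hcomp : Jres ∘ₗ Jres = (-1 : ℝ) • LinearMap.id := by
    refine LinearMap.ext fun y => ?_
    rw [LinearMap.comp_apply, hres2]
    rfl
  haveI : Module.Free ℝ P := Module.Free.of_divisionRing ℝ P
  have hdet : LinearMap.det (M := ↥P) Jres * LinearMap.det (M := ↥P) Jres = (-1 : ℝ) ^ (finrank ℝ P) := by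
    rw [← LinearMap.det_comp, hcomp, LinearMap.det_smul, LinearMap.det_id, mul_one]
  rcases Nat.even_or_odd (finrank ℝ P) with h | h
  · rwa [hPrank] at h
  · exfalso
    rw [h.neg_one_pow] at hdet
    nlinarith [mul_self_nonneg (LinearMap.det (M := ↥P) Jres)]
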